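/- Let 𝓑 be a set of n pairwise disjoint balls in ℝ^d with center set C, q ∈ ℝ^d, k ≤ n. If the i-th nearest center distance x_i = d_i(C,q) satisfies d_k(𝓑,q) ≤ x_{k-c_d}, then x_{k-c_d} ≤ 2·d_k(𝓑,q); that is, x_{k-c_d} is a 2-approximation to d_k(𝓑,q) from above in the sense d_k(𝓑,q) ≤ x_{k-c_d} ≤ 2 d_k(𝓑,q). -/

import Mathlib

/-- Distance from a point `q` to the ball `B(c, r)`. -/
noncomputable def ballDist {d : ℕ} (q c : EuclideanSpace ℝ (Fin d)) (r : ℝ) : ℝ :=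
  max (‖q - c‖ - r) 0

/-- The `k`-th smallest distance from `q` to the balls `B (c i) (r i)`.
Taking all radii `0` gives the `k`-th nearest center distance. -/
noncomputable def kthDist {d n : ℕ} (c : Fin n → EuclideanSpace ℝ (Fin d))
    (r : Fin n → ℝ) (k : ℕ) (q : EuclideanSpace ℝ (Fin d)) : ℝ :=
  sInf {x : ℝ | 0 ≤ x ∧ k ≤ {i : Fin n | ballDist q (c i) (r i) ≤ x}.ncard}

lemma aux_mem {n : ℕ} (f : Fin n → ℝ) (k : ℕ) (hk : k ≤ n) :
    sInf {x : ℝ | 0 ≤ x ∧ k ≤ {i : Fin n | f i ≤ x}.ncard} ∈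
      {x : ℝ | 0 ≤ x ∧ k ≤ {i : Fin n | f i ≤ x}.ncard} := by
  have hset : {x : ℝ | k ≤ {i : Fin n | f i ≤ x}.ncard} =
      ⋃ t ∈ Finset.univ.powersetCard k, ⋂ i ∈ t, Set.Ici (f i) := by
    ext x
    simp only [Set.mem_setOf_eq, Set.mem_iUnion, Set.mem_iInter, Set.mem_Ici,
      Finset.mem_powersetCard]
    constructor
    · intro h
      have he : {i : Fin n | f i ≤ x} = ↑(Finset.univ.filter (fun i => f i ≤ x)) := by
        ext i; simp
      rw [he, Set.ncard_coe_finset] at h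
      obtain ⟨t, ht, htc⟩ := Finset.exists_subset_card_eq h
      exact ⟨t, ⟨t.subset_univ, htc⟩, fun i hi => (Finset.mem_filter.1 (ht hi)).2⟩
    · rintro ⟨t, ⟨-, htc⟩, h⟩
      calc k = t.card := htc.symm
        _ = (↑t : Set (Fin n)).ncard := (Set.ncard_coe_finset t).symm
        _ ≤ _ := Set.ncard_le_ncard (fun i hi => h i hi) (Set.toFinite _)
  have hS : {x : ℝ | 0 ≤ x ∧ k ≤ {i : Fin n | f i ≤ x}.ncard} =
      Set.Ici (0:ℝ) ∩ {x : ℝ | k ≤ {i : Fin n | f i ≤ x}.ncard} := by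
    ext x; simp [Set.mem_Ici, and_comm]
  have hclosed : IsClosed {x : ℝ | 0 ≤ x ∧ k ≤ {i : Fin n | f i ≤ x}.ncard} := by
    rw [hS, hset]
    exact isClosed_Ici.inter <| (Finset.univ.powersetCard k).finite_toSet.isClosed_biUnion
      fun t _ => isClosed_biInter fun i _ => isClosed_Ici
  obtain ⟨M, hM⟩ := Finite.exists_le f
  have hne : ({x : ℝ | 0 ≤ x ∧ k ≤ {i : Fin n | f i ≤ x}.ncard}).Nonempty := by
    refine ⟨max M 0, le_max_right _ _, ?_⟩
    have h2 : {i : Fin n | f i ≤ max M 0} = Set.univ := by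
      ext i
      simp only [Set.mem_setOf_eq, Set.mem_univ, iff_true, le_max_iff]
      exact Or.inl (hM i)
    rw [h2, Set.ncard_univ]; simpa using hk
  exact hclosed.csInf_mem hne ⟨0, fun x hx => hx.1⟩

/-- If `d_k(𝓑, q) ≤ x_{k - c_d}` (the `(k - c_d)`-th nearest center distance),
then `x_{k - c_d} ≤ 2 d_k(𝓑, q)`, i.e. `x_{k - c_d}` is a 2-approximation of
`d_k(𝓑, q)` from above. Here `cd` is the packing constant and `k > cd`. -/
theorem stmt_17 (d n : ℕ) (c : Fin n → EuclideanSpace ℝ (Fin d)) (r : Fin n → ℝ)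
    (hr : ∀ i, 0 ≤ r i)
    (hdisj : ∀ i j, i ≠ j →
      Disjoint (Metric.closedBall (c i) (r i)) (Metric.closedBall (c j) (r j)))
    (k : ℕ) (hkn : k ≤ n) (cd : ℕ) (hkcd : cd < k)
    (hcd : ∀ (p : EuclideanSpace ℝ (Fin d)) (ρ : ℝ), 0 < ρ → ∀ (m : ℕ)
        (w : Fin m → EuclideanSpace ℝ (Fin d)) (s : Fin m → ℝ),
      (∀ i, ρ ≤ s i) →
      (∀ i j, i ≠ j →
        Disjoint (Metric.closedBall (w i) (s i)) (Metric.closedBall (w j) (s j))) →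
      (∀ i, (Metric.closedBall (w i) (s i) ∩ Metric.closedBall p ρ).Nonempty) →
      m ≤ cd)
    (q : EuclideanSpace ℝ (Fin d))
    (hyp : kthDist c r k q ≤ kthDist c (fun _ => (0 : ℝ)) (k - cd) q) :
    kthDist c (fun _ => (0 : ℝ)) (k - cd) q ≤ 2 * kthDist c r k q := by
  have hmem : 0 ≤ kthDist c r k q ∧
      k ≤ {i : Fin n | ballDist q (c i) (r i) ≤ kthDist c r k q}.ncard :=
    aux_mem (fun i => ballDist q (c i) (r i)) k hkn
  obtain ⟨hD0, hDcount⟩ := hmem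
  set D := kthDist c r k q with hDdef
  -- convert ncard count to a Finset count
  have hsetA : {i : Fin n | ballDist q (c i) (r i) ≤ D} =
      ↑(Finset.univ.filter (fun i => ballDist q (c i) (r i) ≤ D)) := by
    ext i; simp
  rw [hsetA, Set.ncard_coe_finset] at hDcount
  set Af := Finset.univ.filter (fun i => ballDist q (c i) (r i) ≤ D) with hAf
  rcases eq_or_lt_of_le hD0 with hD0' | hDpos
  · -- degenerate case D = 0 : leads to a contradiction (cd = 0 is impossible)
    exfalso
    have hn : 0 < n := by omega
    set i0 : Fin n := ⟨0, hn⟩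
    have hcd1 : 1 ≤ cd := by
      refine hcd (c i0) (r i0 + 1) (by linarith [hr i0]) 1 (fun _ => c i0)
        (fun _ => r i0 + 1) (fun _ => le_rfl) ?_ ?_
      · intro i j hij; exact absurd (Subsingleton.elim i j) hij
      · intro _
        refine ⟨c i0, ?_, Metric.mem_closedBall_self (by linarith [hr i0])⟩
        show c i0 ∈ Metric.closedBall (c i0) (r i0 + 1)
        exact Metric.mem_closedBall_self (by linarith [hr i0])
    -- at most one ball contains q, so Af.card ≤ 1, hence k ≤ 1, contradicting cd < k
    have hsub : ∀ i ∈ Af, ∀ j ∈ Af, i = j := by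
      intro i hi j hj
      by_contra hij
      have hqi : q ∈ Metric.closedBall (c i) (r i) := by
        have := (Finset.mem_filter.1 hi).2
        rw [← hD0'] at this
        have h1 : ‖q - c i‖ - r i ≤ 0 := le_trans (le_max_left _ _) this
        simpa [Metric.mem_closedBall, dist_eq_norm] using by linarith
      have hqj : q ∈ Metric.closedBall (c j) (r j) := by
        have := (Finset.mem_filter.1 hj).2
        rw [← hD0'] at this
        have h1 : ‖q - c j‖ - r j ≤ 0 := le_trans (le_max_left _ _) this
        simpa [Metric.mem_closedBall, dist_eq_norm] using by linarith
      exact Set.disjoint_left.1 (hdisj i j hij) hqi hqj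
    have hA1 : Af.card ≤ 1 := Finset.card_le_one.2 hsub
    omega
  · -- main case D > 0
    -- the balls with radius ≥ D that are D-close to q : at most cd of them
    set Bf := Finset.univ.filter
      (fun i => ballDist q (c i) (r i) ≤ D ∧ D ≤ r i) with hBf
    have hBcard : Bf.card ≤ cd := by
      set e : Fin Bf.card ≃o {x // x ∈ Bf} := Bf.orderIsoOfFin rfl with he
      refine hcd q D hDpos Bf.card (fun j => c (e j)) (fun j => r (e j)) ?_ ?_ ?_
      · intro j
        exact (Finset.mem_filter.1 (e j).2).2.2
      · intro i j hij
        refine hdisj _ _ (fun hc => hij ?_)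
        exact e.injective (Subtype.ext hc)
      · intro j
        set i := ((e j : {x // x ∈ Bf}) : Fin n) with hi
        obtain ⟨hball, hrad⟩ := (Finset.mem_filter.1 (e j).2).2
        -- ballDist ≤ D means ‖q - c i‖ ≤ D + r i
        have hnorm : ‖q - c i‖ ≤ D + r i := by
          have h1 : ‖q - c i‖ - r i ≤ D := le_trans (le_max_left _ _) hball
          linarith
        have hden : (0:ℝ) < D + r i := by linarith [hr i]
        set t : ℝ := r i / (D + r i) with ht
        have ht0 : 0 ≤ t := div_nonneg (hr i) hden.le
        have ht1 : t ≤ 1 := by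
          rw [ht, div_le_one hden]; linarith
        refine ⟨c i + t • (q - c i), ?_, ?_⟩
        · rw [Metric.mem_closedBall, dist_eq_norm]
          have : c i + t • (q - c i) - c i = t • (q - c i) := by abel
          rw [this, norm_smul, Real.norm_of_nonneg ht0]
          calc t * ‖q - c i‖ ≤ t * (D + r i) :=
                mul_le_mul_of_nonneg_left hnorm ht0
            _ = r i := by rw [ht]; field_simp
        · rw [Metric.mem_closedBall, dist_eq_norm]
          have heq : c i + t • (q - c i) - q = -((1 - t) • (q - c i)) := by
            rw [sub_smul, one_smul]; abel
          rw [heq, norm_neg, norm_smul, Real.norm_of_nonneg (by linarith)]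
          calc (1 - t) * ‖q - c i‖ ≤ (1 - t) * (D + r i) :=
                mul_le_mul_of_nonneg_left hnorm (by linarith)
            _ = D := by rw [ht]; field_simp; ring
    -- hence at least k - cd indices have ballDist ≤ D and r i < D,
    -- and for those ‖q - c i‖ ≤ 2 D
    have hBsub : Bf ⊆ Af := by
      intro i hi
      exact Finset.mem_filter.2 ⟨Finset.mem_univ i, (Finset.mem_filter.1 hi).2.1⟩
    have hdiff : k - cd ≤ (Af \ Bf).card := by
      rw [Finset.card_sdiff_of_subset hBsub]; omega
    have hsubC : Af \ Bf ⊆ Finset.univ.filter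
        (fun i => ballDist q (c i) (0:ℝ) ≤ 2 * D) := by
      intro i hi
      obtain ⟨hiA, hiB⟩ := Finset.mem_sdiff.1 hi
      have hball : ballDist q (c i) (r i) ≤ D := (Finset.mem_filter.1 hiA).2
      have hrad : r i < D := by
        by_contra h
        exact hiB (Finset.mem_filter.2 ⟨Finset.mem_univ i, hball, not_lt.1 h⟩)
      have hnorm : ‖q - c i‖ ≤ 2 * D := by
        have h1 : ‖q - c i‖ - r i ≤ D := le_trans (le_max_left _ _) hball
        linarith
      refine Finset.mem_filter.2 ⟨Finset.mem_univ i, ?_⟩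
      unfold ballDist
      rw [sub_zero]
      exact max_le hnorm (by linarith)
    have hcount : k - cd ≤
        {i : Fin n | ballDist q (c i) ((fun _ => (0:ℝ)) i) ≤ 2 * D}.ncard := by
      have hsetC : {i : Fin n | ballDist q (c i) ((fun _ => (0:ℝ)) i) ≤ 2 * D} =
          ↑(Finset.univ.filter (fun i => ballDist q (c i) (0:ℝ) ≤ 2 * D)) := by
        ext i; simp
      rw [hsetC, Set.ncard_coe_finset]
      exact le_trans hdiff (Finset.card_le_card hsubC)
    exact csInf_le ⟨0, fun x hx => hx.1⟩ ⟨by linarith, hcount⟩
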